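/- Let T be a finite tree with nonnegative real edge weights, rooted at r, let P be a finite multiset of vertices of T, and let v be a vertex. If (A,B) and (A',B') are two partitions of P into multisets such that A restricted to the vertices of T_v equals A' restricted to the vertices of T_v, B restricted to T_v equals B' restricted to T_v, |A| = |A'|, and |B| = |B'|, then Σ_{e edge of T_v} w(e)·cross_e(A,B) = Σ_{e edge of T_v} w(e)·cross_e(A',B'). That is, the total weight of the fragments of connecting paths contained within T_v depends only on the partition of P_v and on the numbers of elements of P outside T_v in each side. -/

import Mathlib

open SimpleGraph Classical in
/-- uniqueness of paths in a tree -/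
lemma tree_path_unique {V : Type} {G : SimpleGraph V} (hT : G.IsTree) {a b : V}
    (p q : G.Walk a b) (hp : p.IsPath) (hq : q.IsPath) : p = q := by
  have h := (SimpleGraph.isAcyclic_iff_path_unique).mp hT.IsAcyclic
  exact congrArg Subtype.val (h ⟨p, hp⟩ ⟨q, hq⟩)

open SimpleGraph Classical in
/-- membership of an edge in the unique path iff not reachable after deletion -/
lemma mem_edges_iff_not_reachable {V : Type} {G : SimpleGraph V} (hT : G.IsTree)
    (pth : ∀ u v : V, G.Walk u v) (hpth : ∀ u v, (pth u v).IsPath)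
    (e : Sym2 V) (a b : V) :
    e ∈ (pth a b).edges ↔ ¬ (G.deleteEdges {e}).Reachable a b := by
  constructor
  · intro he hr
    obtain ⟨q⟩ := hr
    have hq : ∀ f ∈ (q.map (SimpleGraph.Hom.ofLE (G.deleteEdges_le {e}))).edges,
        f ≠ e := by
      intro f hf
      rw [SimpleGraph.Walk.edges_map] at hf
      obtain ⟨f', hf', rfl⟩ := List.mem_map.mp hf
      have hmem := q.edges_subset_edgeSet hf'
      rw [SimpleGraph.edgeSet_deleteEdges] at hmem
      have h2 : Sym2.map (SimpleGraph.Hom.ofLE (G.deleteEdges_le {e})) f' = f' := by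
        simp [SimpleGraph.Hom.ofLE_apply, Sym2.map_id']
      rw [h2]
      intro h
      subst h
      exact hmem.2 rfl
    set q' := (q.map (SimpleGraph.Hom.ofLE (G.deleteEdges_le {e}))) with hq'
    have hbp : q'.bypass = pth a b :=
      tree_path_unique hT _ _ q'.bypass_isPath (hpth a b)
    rw [← hbp] at he
    exact hq e (q'.edges_bypass_subset he) rfl
  · intro hr
    by_contra he
    exact hr ⟨(pth a b).toDeleteEdges {e} (by intro f hf; simp; rintro rfl; exact he hf)⟩

open SimpleGraph Classical in
/-- every vertex reaches one of the endpoints of a deleted edge -/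
lemma reach_endpoint {V : Type} {G : SimpleGraph V} (hT : G.IsTree) (x y : V) :
    ∀ u : V, (G.deleteEdges {s(x,y)}).Reachable u x ∨ (G.deleteEdges {s(x,y)}).Reachable u y := by
  have main : ∀ {u t : V} (_ : G.Walk u t),
      (G.deleteEdges {s(x,y)}).Reachable u t ∨
      (G.deleteEdges {s(x,y)}).Reachable u x ∨ (G.deleteEdges {s(x,y)}).Reachable u y := by
    intro u t p
    induction p with
    | nil => exact Or.inl (SimpleGraph.Reachable.refl _)
    | @cons u u' t h q ih =>
      by_cases hc : s(u, u') = s(x, y)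
      · rw [Sym2.eq_iff] at hc
        rcases hc with ⟨rfl, rfl⟩ | ⟨rfl, rfl⟩
        · exact Or.inr (Or.inl (SimpleGraph.Reachable.refl _))
        · exact Or.inr (Or.inr (SimpleGraph.Reachable.refl _))
      · have hadj : (G.deleteEdges {s(x,y)}).Adj u u' := by
          rw [SimpleGraph.deleteEdges_adj]; exact ⟨h, by simpa using hc⟩
        rcases ih with h1 | h1 | h1
        · exact Or.inl (hadj.reachable.trans h1)
        · exact Or.inr (Or.inl (hadj.reachable.trans h1))
        · exact Or.inr (Or.inr (hadj.reachable.trans h1))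
  intro u
  obtain ⟨p⟩ := hT.isConnected.preconnected u x
  rcases main p with h | h | h
  · exact Or.inl h
  · exact Or.inl h
  · exact Or.inr h

open Classical in
/-- counting lemma: cardinality of the cross pairs -/
lemma card_cross {V : Type} (A B : Multiset V) (f : V → Prop) [DecidablePred f]
    (P : V × V → Prop) [DecidablePred P]
    (hP : ∀ a b : V, P (a, b) ↔ ¬ (f a ↔ f b)) :
    ((A ×ˢ B).filter P).card =
      (A.filter f).card * (B.filter (fun b => ¬ f b)).card +
      (A.filter (fun a => ¬ f a)).card * (B.filter f).card := by
  conv_lhs => rw [← Multiset.filter_add_not f A, ← Multiset.filter_add_not f B]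
  rw [Multiset.add_product, Multiset.product_add, Multiset.product_add,
    Multiset.filter_add, Multiset.filter_add, Multiset.filter_add]
  have h11 : ((A.filter f ×ˢ B.filter f).filter P) = 0 := by
    rw [Multiset.filter_eq_nil]
    rintro ⟨a, b⟩ hab
    obtain ⟨ha', hb'⟩ := Multiset.mem_product.mp hab
    have ha := Multiset.of_mem_filter ha'
    have hb := Multiset.of_mem_filter hb'
    rw [hP]; tauto
  have h22 : ((A.filter (fun a => ¬ f a) ×ˢ B.filter (fun b => ¬ f b)).filter P) = 0 := by
    rw [Multiset.filter_eq_nil]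
    rintro ⟨a, b⟩ hab
    obtain ⟨ha', hb'⟩ := Multiset.mem_product.mp hab
    have ha := Multiset.of_mem_filter ha'
    have hb := Multiset.of_mem_filter hb'
    rw [hP]; tauto
  have h12 : ((A.filter f ×ˢ B.filter (fun b => ¬ f b)).filter P) =
      A.filter f ×ˢ B.filter (fun b => ¬ f b) := by
    rw [Multiset.filter_eq_self]
    rintro ⟨a, b⟩ hab
    obtain ⟨ha', hb'⟩ := Multiset.mem_product.mp hab
    have ha := Multiset.of_mem_filter ha'
    have hb := Multiset.of_mem_filter hb'
    rw [hP]; tauto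
  have h21 : ((A.filter (fun a => ¬ f a) ×ˢ B.filter f).filter P) =
      A.filter (fun a => ¬ f a) ×ˢ B.filter f := by
    rw [Multiset.filter_eq_self]
    rintro ⟨a, b⟩ hab
    obtain ⟨ha', hb'⟩ := Multiset.mem_product.mp hab
    have ha := Multiset.of_mem_filter ha'
    have hb := Multiset.of_mem_filter hb'
    rw [hP]; tauto
  rw [h11, h12, h21, h22]
  simp [Multiset.card_product]

open Classical in
theorem statement3
    {V : Type} [Fintype V] [DecidableEq V]
    (G : SimpleGraph V) [Fintype G.edgeSet] (hT : G.IsTree)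
    (w : Sym2 V → ℝ) (hw : ∀ e, 0 ≤ w e)
    (pth : ∀ u v : V, G.Walk u v) (hpth : ∀ u v, (pth u v).IsPath)
    (r v : V) (P A B A' B' : Multiset V)
    (hP : A + B = P) (hP' : A' + B' = P)
    (hA : A.filter (fun x => v ∈ (pth x r).support) =
          A'.filter (fun x => v ∈ (pth x r).support))
    (hB : B.filter (fun x => v ∈ (pth x r).support) =
          B'.filter (fun x => v ∈ (pth x r).support))
    (hcardA : A.card = A'.card) (hcardB : B.card = B'.card) :
    ∑ e ∈ G.edgeFinset.filter (fun e => ∀ x ∈ e, v ∈ (pth x r).support),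
        w e * (((A ×ˢ B).filter fun ab => e ∈ (pth ab.1 ab.2).edges).card : ℝ) =
    ∑ e ∈ G.edgeFinset.filter (fun e => ∀ x ∈ e, v ∈ (pth x r).support),
        w e * (((A' ×ˢ B').filter fun ab => e ∈ (pth ab.1 ab.2).edges).card : ℝ) := by
  apply Finset.sum_congr rfl
  intro e he
  rw [Finset.mem_filter, SimpleGraph.mem_edgeFinset] at he
  obtain ⟨heE, hev⟩ := he
  congr 1
  norm_cast
  revert heE hev
  induction e using Sym2.ind with
  | _ x y =>
  intro heE hev
  rw [SimpleGraph.mem_edgeSet] at heE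
  set f : V → Prop := fun u => s(x, y) ∈ (pth u r).edges with hf
  -- f u implies u is in the subtree T_v
  have hf_imp : ∀ u, f u → v ∈ (pth u r).support := by
    intro u hu
    have hx : x ∈ (pth u r).support :=
      SimpleGraph.Walk.fst_mem_support_of_mem_edges _ hu
    have hdp : ((pth u r).dropUntil x hx).IsPath := (hpth u r).dropUntil hx
    have heq : (pth u r).dropUntil x hx = pth x r :=
      tree_path_unique hT _ _ hdp (hpth x r)
    have hvx : v ∈ (pth x r).support := hev x (Sym2.mem_mk_left x y)
    rw [← heq] at hvx
    exact SimpleGraph.Walk.support_dropUntil_subset _ hx hvx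
  -- the deleted edge is a bridge
  have hbridge : ¬ (G.deleteEdges {s(x,y)}).Reachable x y := by
    have hb := SimpleGraph.isAcyclic_iff_forall_edge_isBridge.mp hT.IsAcyclic
      (e := s(x,y)) (G.mem_edgeSet.mpr heE)
    exact SimpleGraph.isBridge_iff.mp hb
  -- two-component characterization of reachability
  have hreach : ∀ a b : V, (G.deleteEdges {s(x,y)}).Reachable a b ↔
      ((G.deleteEdges {s(x,y)}).Reachable a r ↔ (G.deleteEdges {s(x,y)}).Reachable b r) := by
    intro a b
    constructor
    · intro h
      exact ⟨fun h2 => h.symm.trans h2, fun h2 => h.trans h2⟩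
    · intro h
      rcases reach_endpoint hT x y a with ha | ha <;>
        rcases reach_endpoint hT x y b with hb | hb
      · exact ha.trans hb.symm
      · exfalso
        rcases reach_endpoint hT x y r with hr | hr
        · exact hbridge (hb.symm.trans ((h.mp (ha.trans hr.symm)).trans hr)).symm
        · exact hbridge (ha.symm.trans ((h.mpr (hb.trans hr.symm)).trans hr))
      · exfalso
        rcases reach_endpoint hT x y r with hr | hr
        · exact hbridge (ha.symm.trans ((h.mpr (hb.trans hr.symm)).trans hr)).symm
        · exact hbridge (hb.symm.trans ((h.mp (ha.trans hr.symm)).trans hr))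
      · exact ha.trans hb.symm
  -- xor characterization of edge membership
  have hxor : ∀ a b : V, (s(x,y) ∈ (pth a b).edges) ↔ ¬ (f a ↔ f b) := by
    intro a b
    have h1 := mem_edges_iff_not_reachable hT pth hpth s(x,y) a b
    have h2 := mem_edges_iff_not_reachable hT pth hpth s(x,y) a r
    have h3 := mem_edges_iff_not_reachable hT pth hpth s(x,y) b r
    have h4 := hreach a b
    simp only [hf]
    tauto
  -- filters by f agree
  have key : ∀ (M M' : Multiset V),
      M.filter (fun u => v ∈ (pth u r).support) = M'.filter (fun u => v ∈ (pth u r).support) →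
      M.filter f = M'.filter f := by
    intro M M' hMM'
    have e1 : ∀ N : Multiset V, N.filter f =
        (N.filter (fun u => v ∈ (pth u r).support)).filter f := by
      intro N
      rw [Multiset.filter_filter]
      exact Multiset.filter_congr (fun a _ => ⟨fun h => ⟨h, hf_imp a h⟩, fun h => h.1⟩)
    rw [e1, hMM', ← e1]
  have hAf : A.filter f = A'.filter f := key A A' hA
  have hBf : B.filter f = B'.filter f := key B B' hB
  -- complement cardinalities agree
  have hAn : (A.filter (fun a => ¬ f a)).card = (A'.filter (fun a => ¬ f a)).card := by
    have h1 := congrArg Multiset.card (Multiset.filter_add_not f A)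
    have h2 := congrArg Multiset.card (Multiset.filter_add_not f A')
    rw [Multiset.card_add] at h1 h2
    rw [hAf] at h1
    omega
  have hBn : (B.filter (fun b => ¬ f b)).card = (B'.filter (fun b => ¬ f b)).card := by
    have h1 := congrArg Multiset.card (Multiset.filter_add_not f B)
    have h2 := congrArg Multiset.card (Multiset.filter_add_not f B')
    rw [Multiset.card_add] at h1 h2
    rw [hBf] at h1
    omega
  rw [card_cross A B f _ (fun a b => hxor a b), card_cross A' B' f _ (fun a b => hxor a b),
    hAf, hBf, hAn, hBn]
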